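/- Let f(z) = 1 + z + z² + z³ and suppose x > 0, z > 0 satisfy z = x·f(z) and x·f'(z) = 1. Then x = 1/(1 + 2z + 3z²) and 1/x > 3.61. -/
import Mathlib

theorem singularity_conditions (x z : ℝ) (hx : 0 < x) (hz : 0 < z)
    (h1 : z = x * (1 + z + z ^ 2 + z ^ 3))
    (h2 : x * (1 + 2 * z + 3 * z ^ 2) = 1) :
    x = 1 / (1 + 2 * z + 3 * z ^ 2) ∧ 1 / x > 3.61 := by
  have hq : (0:ℝ) < 1 + 2 * z + 3 * z ^ 2 := by positivity
  have hx1 : x = 1 / (1 + 2 * z + 3 * z ^ 2) := by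
    field_simp
    linarith [h2]
  have hcube : 2 * z ^ 3 + z ^ 2 - 1 = 0 := by
    have := h1
    rw [hx1] at this
    field_simp at this
    nlinarith [this]
  refine ⟨hx1, ?_⟩
  rw [hx1]
  rw [one_div_one_div]
  nlinarith [sq_nonneg (z - 0.6572), sq_nonneg z, hz, hcube]
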